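/- Relaxed structural lemma under local regularity: let F be twice continuously differentiable on open convex D ⊇ X, with x* ∈ X satisfying ⟨∇F(x*), z − x*⟩ ≥ 0 for z ∈ X. Let H : D → Sym(p) satisfy ‖H(u) − H(x*)‖ ≤ Γ‖u − x*‖, λ_min(H(x*)) = μ* > 0, and assume ∇²F is L-Lipschitz along the segment [x*, x]. If x satisfies ‖x − x*‖ ≤ μ*/(2Γ) and x⁺ = argmin over X of ⟨∇F(x), z − x⟩ + ½(z − x)ᵀ H(x)(z − x), then ‖x⁺ − x*‖ ≤ (2‖H(x*) − ∇²F(x*)‖/μ*)·‖x − x*‖ + ((2Γ + L)/μ*)·‖x − x*‖². -/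

import Mathlib

open scoped RealInnerProductSpace

open Set

/-- Second-order Taylor bound for the gradient along a segment with Lipschitz Hessian. -/
lemma taylor_grad_bound {p : ℕ}
    (D : Set (EuclideanSpace ℝ (Fin p))) (hDconv : Convex ℝ D)
    (gradF : EuclideanSpace ℝ (Fin p) → EuclideanSpace ℝ (Fin p))
    (hessF : EuclideanSpace ℝ (Fin p) →
      (EuclideanSpace ℝ (Fin p) →L[ℝ] EuclideanSpace ℝ (Fin p)))
    (hhess : ∀ u ∈ D, HasFDerivAt gradF (hessF u) u)
    (xstar x : EuclideanSpace ℝ (Fin p)) (hxstarD : xstar ∈ D) (hxD : x ∈ D)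
    (L : ℝ)
    (hlip : ∀ u ∈ segment ℝ xstar x, ∀ v ∈ segment ℝ xstar x,
      ‖hessF u - hessF v‖ ≤ L * ‖u - v‖) :
    ‖gradF x - gradF xstar - hessF xstar (x - xstar)‖ ≤ L / 2 * ‖x - xstar‖ ^ 2 := by
  set d := x - xstar with hd
  set γ : ℝ → EuclideanSpace ℝ (Fin p) := fun t => xstar + t • d with hγ
  have hseg : ∀ t ∈ Icc (0:ℝ) 1, γ t ∈ segment ℝ xstar x := by
    intro t ht
    rw [segment_eq_image']
    exact ⟨t, ht, rfl⟩
  have hsegD : segment ℝ xstar x ⊆ D := hDconv.segment_subset hxstarD hxD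
  set f : ℝ → EuclideanSpace ℝ (Fin p) :=
    fun t => gradF (γ t) - gradF xstar - t • (hessF xstar d) with hf
  have hγderiv : ∀ t : ℝ, HasDerivAt γ d t := by
    intro t
    have := ((hasDerivAt_id' t).smul_const d).const_add xstar
    simp only [one_smul] at this
    exact this
  have hfderiv : ∀ t ∈ Icc (0:ℝ) 1,
      HasDerivAt f (hessF (γ t) d - hessF xstar d) t := by
    intro t ht
    have h1 : HasDerivAt (fun t => gradF (γ t)) (hessF (γ t) d) t :=
      (hhess (γ t) (hsegD (hseg t ht))).comp_hasDerivAt t (hγderiv t)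
    have h2 : HasDerivAt (fun t : ℝ => t • (hessF xstar d)) (hessF xstar d) t := by
      simpa using (hasDerivAt_id t).smul_const (hessF xstar d)
    exact (h1.sub_const (gradF xstar)).sub h2
  have key : ∀ ⦃t⦄, t ∈ Icc (0:ℝ) 1 → ‖f t‖ ≤ L / 2 * ‖d‖ ^ 2 * t ^ 2 := by
    apply image_norm_le_of_norm_deriv_right_le_deriv_boundary
      (f' := fun t => hessF (γ t) d - hessF xstar d)
      (B := fun t => L / 2 * ‖d‖ ^ 2 * t ^ 2)
      (B' := fun t => L * ‖d‖ ^ 2 * t)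
    case hf =>
      intro t ht
      exact (hfderiv t ht).continuousAt.continuousWithinAt
    case hf' =>
      intro t ht
      exact (hfderiv t (Ico_subset_Icc_self ht)).hasDerivWithinAt
    case ha => simp [hf, hγ]
    case hB =>
      intro t
      have : HasDerivAt (fun t : ℝ => L / 2 * ‖d‖ ^ 2 * t ^ 2)
          (L / 2 * ‖d‖ ^ 2 * (2 * t)) t := by
        simpa using (hasDerivAt_pow 2 t).const_mul (L / 2 * ‖d‖ ^ 2)
      convert this using 1
      ring
    case bound =>
      intro t ht
      have htIcc : t ∈ Icc (0:ℝ) 1 := Ico_subset_Icc_self ht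
      have hb : ‖hessF (γ t) - hessF xstar‖ ≤ L * ‖γ t - xstar‖ := by
        have h0 : xstar ∈ segment ℝ xstar x := left_mem_segment ℝ xstar x
        exact hlip _ (hseg t htIcc) _ h0
      have hnorm : ‖γ t - xstar‖ = t * ‖d‖ := by
        simp [hγ, norm_smul, abs_of_nonneg ht.1]
      calc ‖hessF (γ t) d - hessF xstar d‖
          = ‖(hessF (γ t) - hessF xstar) d‖ := by simp
        _ ≤ ‖hessF (γ t) - hessF xstar‖ * ‖d‖ :=
            (hessF (γ t) - hessF xstar).le_opNorm d
        _ ≤ L * ‖γ t - xstar‖ * ‖d‖ := by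
            have : (0:ℝ) ≤ ‖d‖ := norm_nonneg _
            nlinarith [norm_nonneg (hessF (γ t) - hessF xstar)]
        _ = L * ‖d‖ ^ 2 * t := by rw [hnorm]; ring
  have h1 := key (by norm_num : (1:ℝ) ∈ Icc (0:ℝ) 1)
  have : f 1 = gradF x - gradF xstar - hessF xstar d := by
    simp [hf, hγ, hd]
  rw [this] at h1
  simpa using h1

/-- Relaxed structural lemma under local regularity: the scaling matrix `H(·)` is
`Γ`-Lipschitz around `x*`, positive definite at `x*` with smallest eigenvalue at least `μ*`,
and the iterate is within `μ*/(2Γ)` of `x*`. -/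
theorem structural_error_recursion_local_regularity {p : ℕ}
    (D X : Set (EuclideanSpace ℝ (Fin p)))
    (hD : IsOpen D) (hDconv : Convex ℝ D) (hXconv : Convex ℝ X) (hXD : X ⊆ D)
    (F : EuclideanSpace ℝ (Fin p) → ℝ)
    (gradF : EuclideanSpace ℝ (Fin p) → EuclideanSpace ℝ (Fin p))
    (hessF : EuclideanSpace ℝ (Fin p) →
      (EuclideanSpace ℝ (Fin p) →L[ℝ] EuclideanSpace ℝ (Fin p)))
    (hgrad : ∀ u ∈ D, HasGradientAt F (gradF u) u)
    (hhess : ∀ u ∈ D, HasFDerivAt gradF (hessF u) u)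
    (hhessCont : ContinuousOn hessF D)
    (xstar x xplus : EuclideanSpace ℝ (Fin p))
    (hxstarX : xstar ∈ X) (hxX : x ∈ X) (hxplusX : xplus ∈ X)
    (hVIstar : ∀ z ∈ X, 0 ≤ ⟪gradF xstar, z - xstar⟫)
    (L Γ μs : ℝ) (hL : 0 ≤ L) (hΓ : 0 < Γ) (hμs : 0 < μs)
    (hlip : ∀ u ∈ segment ℝ xstar x, ∀ v ∈ segment ℝ xstar x,
      ‖hessF u - hessF v‖ ≤ L * ‖u - v‖)
    (Hmap : EuclideanSpace ℝ (Fin p) →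
      (EuclideanSpace ℝ (Fin p) →L[ℝ] EuclideanSpace ℝ (Fin p)))
    (hHsym : ∀ u ∈ D, ∀ a b, ⟪Hmap u a, b⟫ = ⟪a, Hmap u b⟫)
    (hHlip : ∀ u ∈ D, ‖Hmap u - Hmap xstar‖ ≤ Γ * ‖u - xstar‖)
    (hHmin : ∀ v, μs * ‖v‖ ^ 2 ≤ ⟪v, Hmap xstar v⟫)
    (hclose : ‖x - xstar‖ ≤ μs / (2 * Γ))
    (hVI : ∀ z ∈ X, 0 ≤ ⟪gradF x + Hmap x (xplus - x), z - xplus⟫) :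
    ‖xplus - xstar‖ ≤
      (2 * ‖Hmap xstar - hessF xstar‖ / μs) * ‖x - xstar‖ +
      ((2 * Γ + L) / μs) * ‖x - xstar‖ ^ 2 := by
  set d := x - xstar with hd
  set e := xplus - xstar with he
  have hxD : x ∈ D := hXD hxX
  have hxstarD : xstar ∈ D := hXD hxstarX
  -- Taylor bound
  have hTaylor : ‖gradF x - gradF xstar - hessF xstar d‖ ≤ L / 2 * ‖d‖ ^ 2 :=
    taylor_grad_bound D hDconv gradF hessF hhess xstar x hxstarD hxD L hlip
  -- combine variational inequalities
  have hVI1 : 0 ≤ ⟪gradF x + Hmap x (xplus - x), xstar - xplus⟫ := hVI xstar hxstarX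
  have hVI2 : 0 ≤ ⟪gradF xstar, xplus - xstar⟫ := hVIstar xplus hxplusX
  have hcomb : ⟪Hmap x e, e⟫ ≤ ⟪gradF xstar - gradF x + Hmap x d, e⟫ := by
    have h1 : ⟪gradF x + Hmap x (xplus - x), e⟫ ≤ 0 := by
      have hx1 : xstar - xplus = -e := by simp [he]
      rw [hx1, inner_neg_right] at hVI1
      linarith
    have hsplit : Hmap x (xplus - x) = Hmap x e - Hmap x d := by
      rw [← map_sub]
      congr 1
      simp [he, hd]
    rw [hsplit] at h1
    have h1' : ⟪gradF x, e⟫ + (⟪Hmap x e, e⟫ - ⟪Hmap x d, e⟫) ≤ 0 := by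
      rw [← inner_sub_left, ← inner_add_left]; exact h1
    have h2' : 0 ≤ ⟪gradF xstar, e⟫ := hVI2
    have hexp : ⟪gradF xstar - gradF x + Hmap x d, e⟫
        = ⟪gradF xstar, e⟫ - ⟪gradF x, e⟫ + ⟪Hmap x d, e⟫ := by
      rw [inner_add_left, inner_sub_left]
    rw [hexp]
    linarith
  -- lower bound on the quadratic form
  have hΓd : Γ * ‖d‖ ≤ μs / 2 := by
    have := mul_le_mul_of_nonneg_left hclose hΓ.le
    calc Γ * ‖d‖ ≤ Γ * (μs / (2 * Γ)) := this
      _ = μs / 2 := by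
          have hΓne : Γ ≠ 0 := hΓ.ne'
          field_simp
  have hlow : μs / 2 * ‖e‖ ^ 2 ≤ ⟪Hmap x e, e⟫ := by
    have hmin : μs * ‖e‖ ^ 2 ≤ ⟪Hmap xstar e, e⟫ := by
      rw [real_inner_comm]; exact hHmin e
    have hdiff : |⟪(Hmap x - Hmap xstar) e, e⟫| ≤ Γ * ‖d‖ * ‖e‖ ^ 2 := by
      calc |⟪(Hmap x - Hmap xstar) e, e⟫|
          ≤ ‖(Hmap x - Hmap xstar) e‖ * ‖e‖ := abs_real_inner_le_norm _ _
        _ ≤ ‖Hmap x - Hmap xstar‖ * ‖e‖ * ‖e‖ :=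
            mul_le_mul_of_nonneg_right ((Hmap x - Hmap xstar).le_opNorm e) (norm_nonneg _)
        _ ≤ Γ * ‖d‖ * ‖e‖ ^ 2 := by
            have := hHlip x hxD
            nlinarith [norm_nonneg e, norm_nonneg (Hmap x - Hmap xstar)]
    have hsplit : ⟪Hmap x e, e⟫ = ⟪Hmap xstar e, e⟫ + ⟪(Hmap x - Hmap xstar) e, e⟫ := by
      simp [inner_sub_left]
    rw [hsplit]
    have h1 : -(Γ * ‖d‖ * ‖e‖ ^ 2) ≤ ⟪(Hmap x - Hmap xstar) e, e⟫ := (abs_le.mp hdiff).1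
    have h2 : Γ * ‖d‖ * ‖e‖ ^ 2 ≤ μs / 2 * ‖e‖ ^ 2 :=
      mul_le_mul_of_nonneg_right hΓd (sq_nonneg _)
    linarith
  -- upper bound on the RHS
  set K := ‖Hmap xstar - hessF xstar‖ * ‖d‖ + (Γ + L / 2) * ‖d‖ ^ 2 with hK
  have hup : ⟪gradF xstar - gradF x + Hmap x d, e⟫ ≤ K * ‖e‖ := by
    have hdecomp : gradF xstar - gradF x + Hmap x d
        = -(gradF x - gradF xstar - hessF xstar d)
          + ((Hmap x - Hmap xstar) d + (Hmap xstar - hessF xstar) d) := by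
      simp only [ContinuousLinearMap.sub_apply]
      abel
    have hnorm : ‖gradF xstar - gradF x + Hmap x d‖ ≤ K := by
      rw [hdecomp]
      calc ‖-(gradF x - gradF xstar - hessF xstar d)
            + ((Hmap x - Hmap xstar) d + (Hmap xstar - hessF xstar) d)‖
          ≤ ‖gradF x - gradF xstar - hessF xstar d‖
            + (‖(Hmap x - Hmap xstar) d‖ + ‖(Hmap xstar - hessF xstar) d‖) := by
            refine (norm_add_le _ _).trans ?_
            rw [norm_neg]
            exact add_le_add le_rfl (norm_add_le _ _)
        _ ≤ L / 2 * ‖d‖ ^ 2 + (Γ * ‖d‖ * ‖d‖ + ‖Hmap xstar - hessF xstar‖ * ‖d‖) := by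
            refine add_le_add hTaylor (add_le_add ?_ ((Hmap xstar - hessF xstar).le_opNorm d))
            calc ‖(Hmap x - Hmap xstar) d‖ ≤ ‖Hmap x - Hmap xstar‖ * ‖d‖ :=
                  (Hmap x - Hmap xstar).le_opNorm d
              _ ≤ Γ * ‖d‖ * ‖d‖ :=
                  mul_le_mul_of_nonneg_right (hHlip x hxD) (norm_nonneg _)
        _ = K := by rw [hK]; ring
    calc ⟪gradF xstar - gradF x + Hmap x d, e⟫
        ≤ ‖gradF xstar - gradF x + Hmap x d‖ * ‖e‖ := real_inner_le_norm _ _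
      _ ≤ K * ‖e‖ := mul_le_mul_of_nonneg_right hnorm (norm_nonneg _)
  have hmain : μs / 2 * ‖e‖ ^ 2 ≤ K * ‖e‖ := le_trans hlow (le_trans hcomb hup)
  -- conclude
  have hKnn : 0 ≤ K := by
    rw [hK]
    have h1 : 0 ≤ ‖Hmap xstar - hessF xstar‖ * ‖d‖ :=
      mul_nonneg (norm_nonneg _) (norm_nonneg _)
    have h2 : 0 ≤ (Γ + L / 2) * ‖d‖ ^ 2 := mul_nonneg (by linarith) (sq_nonneg _)
    linarith
  have hgoal : ‖e‖ ≤ 2 * K / μs := by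
    rcases eq_or_lt_of_le (norm_nonneg e) with h0 | h0
    · rw [← h0]
      exact div_nonneg (by linarith) hμs.le
    · rw [le_div_iff₀ hμs]
      nlinarith [hmain]
  calc ‖e‖ ≤ 2 * K / μs := hgoal
    _ = (2 * ‖Hmap xstar - hessF xstar‖ / μs) * ‖d‖ + ((2 * Γ + L) / μs) * ‖d‖ ^ 2 := by
        have hgen : ∀ N nd : ℝ, 2 * (N * nd + (Γ + L / 2) * nd ^ 2) / μs
            = (2 * N / μs) * nd + ((2 * Γ + L) / μs) * nd ^ 2 := by
          intro N nd
          field_simp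
        rw [hK]
        exact hgen _ _
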